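/- Let Σ := i^k * ι v * ∏_{j=1}^k (1 − ι e_j * ι f_j) and Σ' := i^ℓ * ι v' * ∏_{j=1}^ℓ (1 − ι e'_j * ι f'_j) be two odd-block elements built from unit vectors v, v' (Q v = Q v' = 1) and hyperbolic pairs (e_j, f_j), (e'_j, f'_j), where all the vectors v, e_j, f_j, v', e'_j, f'_j are pairwise orthogonal (except the pairings polar Q e_j f_j = 2 and polar Q e'_j f'_j = 2 within each hyperbolic pair). Then Σ * Σ' = −Σ' * Σ. -/
import Mathlib

open CliffordAlgebra QuadraticMap

lemma anti_of_polar {V : Type*} [AddCommGroup V] [Module ℂ V]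
    (Q : QuadraticForm ℂ V) {x y : V} (h : polar Q x y = 0) :
    ι Q x * ι Q y = -(ι Q y * ι Q x) := by
  rw [ι_mul_ι_comm, h, map_zero, zero_sub]

lemma ι_comm_factor {V : Type*} [AddCommGroup V] [Module ℂ V]
    (Q : QuadraticForm ℂ V) {x a b : V} (ha : polar Q x a = 0) (hb : polar Q x b = 0) :
    Commute (ι Q x) (1 - ι Q a * ι Q b) := by
  have h1 := anti_of_polar Q ha
  have h2 := anti_of_polar Q hb
  unfold Commute SemiconjBy
  rw [mul_sub, sub_mul, mul_one, one_mul]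
  congr 1
  rw [← mul_assoc, h1, neg_mul, mul_assoc, h2, mul_neg, neg_neg, mul_assoc]

lemma factor_comm_factor {V : Type*} [AddCommGroup V] [Module ℂ V]
    (Q : QuadraticForm ℂ V) {a b a' b' : V}
    (h1 : polar Q a a' = 0) (h2 : polar Q a b' = 0)
    (h3 : polar Q b a' = 0) (h4 : polar Q b b' = 0) :
    Commute (1 - ι Q a * ι Q b) (1 - ι Q a' * ι Q b') := by
  have h1' : polar Q a' a = 0 := by rw [polar_comm]; exact h1
  have h2' : polar Q b' a = 0 := by rw [polar_comm]; exact h2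
  have h3' : polar Q a' b = 0 := by rw [polar_comm]; exact h3
  have h4' : polar Q b' b = 0 := by rw [polar_comm]; exact h4
  have ca := (ι_comm_factor Q h1' h3').symm
  have cb := (ι_comm_factor Q h2' h4').symm
  have : Commute (1 - ι Q a * ι Q b) (ι Q a' * ι Q b') := ca.mul_right cb
  exact (Commute.one_right _).sub_right this

/-- Two odd-block elements `Σ = i^k • (ι v * ∏ j (1 - ι (e j) * ι (f j)))` and
`Σ' = i^ℓ • (ι v' * ∏ j (1 - ι (e' j) * ι (f' j)))` built from mutually orthogonal
data anticommute: `Σ * Σ' = -(Σ' * Σ)`. -/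
theorem sigma_odd_anticommute {V : Type*} [AddCommGroup V] [Module ℂ V]
    (Q : QuadraticForm ℂ V) (k l : ℕ)
    (e f : Fin k → V) (v : V) (e' f' : Fin l → V) (v' : V)
    -- first block
    (hQe : ∀ j, Q (e j) = 0) (hQf : ∀ j, Q (f j) = 0)
    (hef : ∀ j, polar Q (e j) (f j) = 2)
    (horth : ∀ i j, i ≠ j →
      polar Q (e i) (e j) = 0 ∧ polar Q (e i) (f j) = 0 ∧ polar Q (f i) (f j) = 0)
    (hv : Q v = 1)
    (hve : ∀ j, polar Q v (e j) = 0) (hvf : ∀ j, polar Q v (f j) = 0)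
    -- second block
    (hQe' : ∀ j, Q (e' j) = 0) (hQf' : ∀ j, Q (f' j) = 0)
    (hef' : ∀ j, polar Q (e' j) (f' j) = 2)
    (horth' : ∀ i j, i ≠ j →
      polar Q (e' i) (e' j) = 0 ∧ polar Q (e' i) (f' j) = 0 ∧
        polar Q (f' i) (f' j) = 0)
    (hv' : Q v' = 1)
    (hve' : ∀ j, polar Q v' (e' j) = 0) (hvf' : ∀ j, polar Q v' (f' j) = 0)
    -- the two blocks are mutually orthogonal
    (hvv' : polar Q v v' = 0)
    (hcross₁ : ∀ j, polar Q v (e' j) = 0 ∧ polar Q v (f' j) = 0)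
    (hcross₂ : ∀ i, polar Q (e i) v' = 0 ∧ polar Q (f i) v' = 0)
    (hcross₃ : ∀ i j, polar Q (e i) (e' j) = 0 ∧ polar Q (e i) (f' j) = 0 ∧
      polar Q (f i) (e' j) = 0 ∧ polar Q (f i) (f' j) = 0)
    (S S' : CliffordAlgebra Q)
    (hS : S = (Complex.I ^ k) •
      (ι Q v * (List.ofFn (fun j : Fin k => 1 - ι Q (e j) * ι Q (f j))).prod))
    (hS' : S' = (Complex.I ^ l) •
      (ι Q v' * (List.ofFn (fun j : Fin l => 1 - ι Q (e' j) * ι Q (f' j))).prod)) :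
    S * S' = -(S' * S) := by
  set P := (List.ofFn (fun j : Fin k => 1 - ι Q (e j) * ι Q (f j))).prod with hP
  set P' := (List.ofFn (fun j : Fin l => 1 - ι Q (e' j) * ι Q (f' j))).prod with hP'
  have cv'P : Commute (ι Q v') P := by
    apply Commute.list_prod_right
    intro x hx
    rw [List.mem_ofFn] at hx
    obtain ⟨j, rfl⟩ := hx
    exact ι_comm_factor Q (by rw [polar_comm]; exact (hcross₂ j).1)
      (by rw [polar_comm]; exact (hcross₂ j).2)
  have cvP' : Commute (ι Q v) P' := by
    apply Commute.list_prod_right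
    intro x hx
    rw [List.mem_ofFn] at hx
    obtain ⟨j, rfl⟩ := hx
    exact ι_comm_factor Q (hcross₁ j).1 (hcross₁ j).2
  have cPP' : Commute P P' := by
    apply Commute.list_prod_right
    intro y hy; rw [List.mem_ofFn] at hy; obtain ⟨j, rfl⟩ := hy
    apply Commute.list_prod_left
    intro x hx; rw [List.mem_ofFn] at hx; obtain ⟨i, rfl⟩ := hx
    exact factor_comm_factor Q (hcross₃ i j).1 (hcross₃ i j).2.1
      (hcross₃ i j).2.2.1 (hcross₃ i j).2.2.2
  have hvv : ι Q v * ι Q v' = -(ι Q v' * ι Q v) := anti_of_polar Q hvv'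
  have key : (ι Q v * P) * (ι Q v' * P') = -((ι Q v' * P') * (ι Q v * P)) := by
    have e1 : ι Q v * P * ι Q v' = ι Q v * ι Q v' * P := by
      rw [mul_assoc, ← cv'P.eq, ← mul_assoc]
    have e2 : ι Q v' * P' * ι Q v = ι Q v' * ι Q v * P' := by
      rw [mul_assoc, ← cvP'.eq, ← mul_assoc]
    rw [← mul_assoc, e1, hvv, ← mul_assoc, e2]
    rw [neg_mul, neg_mul]
    congr 1
    simp only [mul_assoc]
    rw [cPP'.eq]
  rw [hS, hS', smul_mul_assoc, smul_mul_assoc, mul_smul_comm, mul_smul_comm,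
    smul_smul, smul_smul, mul_comm (Complex.I ^ l), key, smul_neg]
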